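/- Let z ∈ ℂ with Im z ≠ 0, and define g_A(w) = exp(-(2/3) Re(w^{3/2})) using the principal branch of the square root (branch cut along the negative real axis). Then the map x ↦ g_A(x - z) is strictly decreasing on ℝ₊ and tends to 0 as x → ∞. -/

import Mathlib

open Set Filter

/-- `g_A(w) = exp(-(2/3) Re(w^{3/2}))`, with the principal branch of the power. -/
noncomputable def gA (w : ℂ) : ℝ :=
  Real.exp (-(2/3) * (w ^ ((3:ℂ)/2)).re)

lemma re_cpow_aux (w : ℂ) (hw : w ≠ 0) (c : ℝ) :
    (w ^ (c : ℂ)).re =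
      Real.exp (c * Real.log (‖w‖)) * Real.cos (c * Complex.arg w) := by
  rw [Complex.cpow_def_of_ne_zero hw, Complex.exp_re]
  have h1 : (Complex.log w * (c : ℂ)).re = c * Real.log (‖w‖) := by
    simp [Complex.mul_re, Complex.log_re, mul_comm]
  have h2 : (Complex.log w * (c : ℂ)).im = c * Complex.arg w := by
    simp [Complex.mul_im, Complex.log_im, mul_comm]
  rw [h1, h2]

lemma arg_lt_pi_of_im_ne_zero (w : ℂ) (hw : w.im ≠ 0) : |Complex.arg w| < Real.pi := by
  rcases lt_or_eq_of_le (Complex.arg_le_pi w) with h | h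
  · rw [abs_lt]; exact ⟨Complex.neg_pi_lt_arg w, h⟩
  · exact absurd ((Complex.arg_eq_pi_iff.mp h).2) hw

lemma re_cpow_half_pos (w : ℂ) (hw : w.im ≠ 0) : 0 < (w ^ ((1:ℂ)/2)).re := by
  have hw0 : w ≠ 0 := fun h => hw (by simp [h])
  have : ((1:ℂ)/2) = ((1/2 : ℝ) : ℂ) := by norm_num
  rw [this, re_cpow_aux w hw0]
  have harg := arg_lt_pi_of_im_ne_zero w hw
  rw [abs_lt] at harg
  have hcos : 0 < Real.cos (1/2 * Complex.arg w) := by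
    apply Real.cos_pos_of_mem_Ioo
    constructor <;> [nlinarith [harg.1]; nlinarith [harg.2]]
  positivity

theorem gA_strictAnti_of_im_ne_zero (z : ℂ) (hz : z.im ≠ 0) :
    StrictAntiOn (fun x : ℝ => gA ((x:ℂ) - z)) (Ici 0) ∧
    Tendsto (fun x : ℝ => gA ((x:ℂ) - z)) atTop (nhds 0) := by
  set f : ℝ → ℝ := fun x => (((x:ℂ) - z) ^ ((3:ℂ)/2)).re with hf
  have him : ∀ x : ℝ, ((x:ℂ) - z).im ≠ 0 := by
    intro x; simp [Complex.sub_im, hz]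
  have hne : ∀ x : ℝ, ((x:ℂ) - z) ≠ 0 := by
    intro x h; exact him x (by simp [h])
  -- derivative of f
  have hderiv : ∀ x : ℝ, HasDerivAt f
      (((3:ℂ)/2 * ((x:ℂ) - z) ^ ((3:ℂ)/2 - 1) * 1).re) x := by
    intro x
    have hd : HasDerivAt (fun w : ℂ => (w - z) ^ ((3:ℂ)/2))
        ((3:ℂ)/2 * ((x:ℂ) - z) ^ ((3:ℂ)/2 - 1) * 1) (x : ℂ) :=
      ((hasDerivAt_id _).sub_const z).cpow_const (Or.inr (him x))
    exact hd.real_of_complex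
  have hderiv_pos : ∀ x : ℝ, 0 < ((3:ℂ)/2 * ((x:ℂ) - z) ^ ((3:ℂ)/2 - 1) * 1).re := by
    intro x
    have h32 : ((3:ℂ)/2 - 1) = (1:ℂ)/2 := by norm_num
    rw [h32, mul_one]
    have : ((3:ℂ)/2 * (((x:ℂ) - z) ^ ((1:ℂ)/2))).re
        = 3/2 * ((((x:ℂ) - z) ^ ((1:ℂ)/2)).re) := by
      have : ((3:ℂ)/2) = ((3/2 : ℝ) : ℂ) := by norm_num
      rw [this, Complex.re_ofReal_mul]
    rw [this]
    have := re_cpow_half_pos _ (him x)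
    linarith
  have hmono : StrictMono f := by
    apply strictMono_of_deriv_pos
    intro x
    rw [(hderiv x).deriv]
    exact hderiv_pos x
  constructor
  · intro a _ b _ hab
    simp only [gA]
    apply Real.exp_lt_exp.mpr
    have := hmono hab
    show -(2/3) * f b < -(2/3) * f a
    nlinarith
  · -- tendsto
    have habs : Tendsto (fun x : ℝ => ‖(x:ℂ) - z‖) atTop atTop := by
      apply tendsto_atTop_mono (fun x => ?_) (tendsto_atTop_add_const_right _ (-z.re) tendsto_id)
      have := Complex.re_le_norm ((x:ℂ) - z)
      simpa using this
    have harg : Tendsto (fun x : ℝ => Complex.arg ((x:ℂ) - z)) atTop (nhds 0) := by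
      have h1 : Tendsto (fun x : ℝ => (-z.im) / ‖(x:ℂ) - z‖) atTop (nhds 0) :=
        tendsto_const_nhds.div_atTop habs
      have h2 : Tendsto (fun x : ℝ => Real.arcsin ((-z.im) / ‖(x:ℂ) - z‖))
          atTop (nhds 0) := by
        have := (Real.continuous_arcsin.tendsto 0).comp h1
        simpa [Real.arcsin_zero, Function.comp_def] using this
      apply h2.congr'
      filter_upwards [eventually_ge_atTop z.re] with x hx
      rw [Complex.arg_of_re_nonneg (by simp [Complex.sub_re]; linarith)]
      simp [Complex.sub_im]
    have hcos : Tendsto (fun x : ℝ => Real.cos (3/2 * Complex.arg ((x:ℂ) - z)))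
        atTop (nhds 1) := by
      have h0 : Tendsto (fun x : ℝ => 3/2 * Complex.arg ((x:ℂ) - z)) atTop (nhds 0) := by
        simpa using harg.const_mul (3/2 : ℝ)
      simpa [Function.comp_def] using (Real.continuous_cos.tendsto 0).comp h0
    have hexp : Tendsto (fun x : ℝ => Real.exp (3/2 * Real.log (‖(x:ℂ) - z‖)))
        atTop atTop := by
      apply Real.tendsto_exp_atTop.comp
      exact (tendsto_const_mul_atTop_of_pos (by norm_num)).mpr
        (Real.tendsto_log_atTop.comp habs)
    have hftop : Tendsto f atTop atTop := by
      have heq : ∀ x : ℝ, f x = Real.exp (3/2 * Real.log (‖(x:ℂ) - z‖))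
          * Real.cos (3/2 * Complex.arg ((x:ℂ) - z)) := by
        intro x
        have h3 : ((3:ℂ)/2) = ((3/2 : ℝ) : ℂ) := by norm_num
        show (((x:ℂ) - z) ^ ((3:ℂ)/2)).re = _
        rw [h3, re_cpow_aux _ (hne x)]
      exact Tendsto.congr (fun x => (heq x).symm) (hexp.atTop_mul_pos (by norm_num) hcos)
    have : Tendsto (fun x : ℝ => -(2/3) * f x) atTop atBot := by
      exact Tendsto.const_mul_atTop_of_neg (by norm_num) hftop
    exact Real.tendsto_exp_atBot.comp this
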